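/- Let X be a weighted sequence of length n ≥ 1 over a finite alphabet Σ, let ε ∈ (0, 1/2] and c > 0 be reals, and let k be a positive integer with k ≥ (c+2)·ε^{−2}·ln(n/ε). Let S_1,…,S_k be independent random strings drawn from the product distribution determined by X. Then with probability at least 1 − (ε/n)^c, for every position i ∈ {1,…,n} and every string P with P_X(P,i) ≥ ε: |P_X(P,i) − (1/k)·#{j ∈ {1,…,k} : S_j[i..i+|P|−1] = P}| ≤ ε. -/

import Mathlib

open scoped Classical
open Finset

variable {α : Type*}

/-- Matching probability `P_X(P,i)` of pattern `P` at (1-based) position `i`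
in a weighted sequence of length `n` with letter probabilities `p`. -/
def matchProb (n : ℕ) (p : ℕ → α → ℝ) : List α → ℕ → ℝ
  | [], _ => 1
  | c :: P, i => if i ≤ n then p i c * matchProb n p P (i + 1) else 0

/-- `p` describes a weighted sequence of length `n`: at each position `i ∈ {1,…,n}`
the letter probabilities are nonnegative and sum to 1. -/
def IsWeighted [Fintype α] (n : ℕ) (p : ℕ → α → ℝ) : Prop :=
  ∀ i, 1 ≤ i → i ≤ n → (∀ c, 0 ≤ p i c) ∧ ∑ c, p i c = 1

/-- A property array for strings of length `n`:
`π i ∈ {i-1,…,n}` for `i ∈ {1,…,n}` and `π` is nondecreasing on `{1,…,n}`. -/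
def IsPropertyArray (n : ℕ) (π : ℕ → ℕ) : Prop :=
  (∀ i, 1 ≤ i → i ≤ n → i - 1 ≤ π i ∧ π i ≤ n) ∧
    ∀ i, 1 ≤ i → i + 1 ≤ n → π i ≤ π (i + 1)

/-- The factor `S[i..j]` (1-based, empty when `j < i`). -/
def factor (S : List α) (i j : ℕ) : List α := (S.drop (i - 1)).take (j + 1 - i)

/-- `i ∈ Occ_π(P,S)`: `P = S[i..i+|P|-1]` and `i+|P|-1 ≤ π i`. -/
def occursAt (S : List α) (π : ℕ → ℕ) (P : List α) (i : ℕ) : Prop :=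
  factor S i (i + P.length - 1) = P ∧ i + P.length - 1 ≤ π i

/-- `Count_𝒮(P,i)`: number of members of the family in which `P` occurs at `i`
respecting the property. -/
noncomputable def countOcc {k : ℕ} (S : Fin k → List α) (π : Fin k → ℕ → ℕ)
    (P : List α) (i : ℕ) : ℕ :=
  (Finset.univ.filter fun j => occursAt (S j) (π j) P i).card

/-- `P` is compatible with `Q` if `P = ε` or `P = cQ'` for a letter `c` and a prefix `Q'` of `Q`. -/
def Compatible (P Q : List α) : Prop :=
  P = [] ∨ ∃ (c : α) (Q' : List α), Q' <+: Q ∧ P = c :: Q'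

/-- A random string `S : Fin n → α` matches pattern `P` at (1-based) position `i`. -/
def Matches {n : ℕ} (S : Fin n → α) (P : List α) (i : ℕ) : Prop :=
  ((List.ofFn S).drop (i - 1)).take P.length = P

/-- The probability of the outcome `S` under the product distribution determined by `p`. -/
def strWeight (n : ℕ) (p : ℕ → α → ℝ) (S : Fin n → α) : ℝ :=
  ∏ j : Fin n, p ((j : ℕ) + 1) (S j)


section Auxiliary

namespace RSE


lemma bernoulli_mgf_le {μ t : ℝ} (h0 : 0 ≤ μ) (h1 : μ ≤ 1) :
    (1 - μ) * Real.exp (-(t * μ)) + μ * Real.exp (t * (1 - μ)) ≤ Real.exp (t ^ 2 / 8) := by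
  set F : ℝ → ℝ := fun s => (1 - μ) * Real.exp (-(s * μ)) + μ * Real.exp (s * (1 - μ)) with hF
  have Fpos : ∀ s, 0 < F s := by
    intro s
    rcases lt_or_eq_of_le h1 with h | h
    · have hm : 0 < 1 - μ := by linarith
      have : 0 < (1 - μ) * Real.exp (-(s * μ)) := by positivity
      have h2 : 0 ≤ μ * Real.exp (s * (1 - μ)) := mul_nonneg h0 (Real.exp_pos _).le
      simp only [hF]; linarith
    · subst h; simp [hF]
  set F' : ℝ → ℝ := fun s => μ * (1 - μ) * (Real.exp (s * (1 - μ)) - Real.exp (-(s * μ))) with hF'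
  set F'' : ℝ → ℝ := fun s =>
    μ * (1 - μ) * ((1 - μ) * Real.exp (s * (1 - μ)) + μ * Real.exp (-(s * μ))) with hF''
  have hdF : ∀ s, HasDerivAt F (F' s) s := by
    intro s
    have e1 : HasDerivAt (fun s : ℝ => Real.exp (-(s * μ))) (-μ * Real.exp (-(s * μ))) s := by
      have : HasDerivAt (fun s : ℝ => -(s * μ)) (-μ) s := by
        exact (hasDerivAt_mul_const μ).neg
      simpa [mul_comm] using this.exp
    have e2 : HasDerivAt (fun s : ℝ => Real.exp (s * (1 - μ))) ((1 - μ) * Real.exp (s * (1 - μ))) s := by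
      have : HasDerivAt (fun s : ℝ => s * (1 - μ)) (1 - μ) s := by
        simpa using (hasDerivAt_id s).mul_const (1 - μ)
      simpa [mul_comm] using this.exp
    have := ((e1.const_mul (1 - μ)).add (e2.const_mul μ))
    refine this.congr_deriv ?_
    simp only [hF']; ring
  have hdF' : ∀ s, HasDerivAt F' (F'' s) s := by
    intro s
    have e1 : HasDerivAt (fun s : ℝ => Real.exp (-(s * μ))) (-μ * Real.exp (-(s * μ))) s := by
      have : HasDerivAt (fun s : ℝ => -(s * μ)) (-μ) s := by
        exact (hasDerivAt_mul_const μ).neg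
      simpa [mul_comm] using this.exp
    have e2 : HasDerivAt (fun s : ℝ => Real.exp (s * (1 - μ))) ((1 - μ) * Real.exp (s * (1 - μ))) s := by
      have : HasDerivAt (fun s : ℝ => s * (1 - μ)) (1 - μ) s := by
        simpa using (hasDerivAt_id s).mul_const (1 - μ)
      simpa [mul_comm] using this.exp
    have := (e2.sub e1).const_mul (μ * (1 - μ))
    refine this.congr_deriv ?_
    simp only [hF'']; ring
  set G : ℝ → ℝ := fun s => s ^ 2 / 8 - Real.log (F s) with hG
  set G' : ℝ → ℝ := fun s => s / 4 - F' s / F s with hG'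
  have hdG : ∀ s, HasDerivAt G (G' s) s := by
    intro s
    have h1' : HasDerivAt (fun s : ℝ => s ^ 2 / 8) (s / 4) s := by
      have := ((hasDerivAt_pow 2 s).div_const 8)
      refine this.congr_deriv ?_; norm_num; ring
    have h2' : HasDerivAt (fun s => Real.log (F s)) (F' s / F s) s :=
      (hdF s).log (ne_of_gt (Fpos s))
    exact h1'.sub h2'
  have hdG' : ∀ s, HasDerivAt G' (1 / 4 - (F'' s * F s - F' s ^ 2) / F s ^ 2) s := by
    intro s
    have h1' : HasDerivAt (fun s : ℝ => s / 4) (1 / 4) s := by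
      simpa using (hasDerivAt_id s).div_const 4
    have h2' : HasDerivAt (fun s => F' s / F s) ((F'' s * F s - F' s * F' s) / F s ^ 2) s :=
      (hdF' s).div (hdF s) (ne_of_gt (Fpos s))
    have := h1'.sub h2'
    refine this.congr_deriv ?_
    ring
  have hG''nonneg : ∀ s, 0 ≤ 1 / 4 - (F'' s * F s - F' s ^ 2) / F s ^ 2 := by
    intro s
    set A := (1 - μ) * Real.exp (-(s * μ)) with hA
    set B := μ * Real.exp (s * (1 - μ)) with hB
    have hA0 : 0 ≤ A := mul_nonneg (by linarith) (Real.exp_pos _).le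
    have hB0 : 0 ≤ B := mul_nonneg h0 (Real.exp_pos _).le
    have hFA : F s = A + B := rfl
    have key : F'' s * F s - F' s ^ 2 = A * B := by
      simp only [hF', hF'', hFA, hA, hB]; ring
    rw [key, hFA]
    have hpos : 0 < (A + B) ^ 2 := by
      have := Fpos s; rw [hFA] at this; positivity
    rw [sub_nonneg, div_le_iff₀ hpos]
    nlinarith [sq_nonneg (A - B)]
  have hG'mono : Monotone G' := by
    apply monotone_of_deriv_nonneg
    · exact fun s => (hdG' s).differentiableAt
    · intro s
      rw [(hdG' s).deriv]
      exact hG''nonneg s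
  have hG'0 : G' 0 = 0 := by simp [hG', hF']
  have hGnonneg : ∀ s, 0 ≤ G s := by
    have hdiffG : ∀ s, DifferentiableAt ℝ G s := fun s => (hdG s).differentiableAt
    have hG0 : G 0 = 0 := by simp [hG, hF]
    intro s
    rcases le_or_gt 0 s with hs | hs
    · have hmono : MonotoneOn G (Set.Ici 0) := by
        apply monotoneOn_of_deriv_nonneg (convex_Ici 0)
        · exact (Differentiable.continuous (fun x => hdiffG x)).continuousOn
        · exact fun x _ => (hdiffG x).differentiableWithinAt
        · intro x hx
          rw [(hdG x).deriv]
          rw [interior_Ici] at hx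
          have : G' 0 ≤ G' x := hG'mono (le_of_lt hx)
          linarith [hG'0 ▸ this]
      have := hmono (Set.self_mem_Ici) hs hs
      linarith [hG0 ▸ this]
    · have hmono : AntitoneOn G (Set.Iic 0) := by
        apply antitoneOn_of_deriv_nonpos (convex_Iic 0)
        · exact (Differentiable.continuous (fun x => hdiffG x)).continuousOn
        · exact fun x _ => (hdiffG x).differentiableWithinAt
        · intro x hx
          rw [(hdG x).deriv]
          rw [interior_Iic] at hx
          have : G' x ≤ G' 0 := hG'mono (le_of_lt hx)
          linarith [hG'0 ▸ this]
      have := hmono (le_of_lt hs) (Set.self_mem_Iic) (le_of_lt hs)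
      linarith [hG0 ▸ this]
    
  have hlog : Real.log (F t) ≤ t ^ 2 / 8 := by
    have := hGnonneg t
    simp only [hG] at this
    linarith
  calc F t = Real.exp (Real.log (F t)) := (Real.exp_log (Fpos t)).symm
    _ ≤ Real.exp (t ^ 2 / 8) := Real.exp_le_exp.mpr hlog


section Chernoff
variable {Ω : Type*} [Fintype Ω]


lemma chernoff_upper (w : Ω → ℝ) (hw0 : ∀ S, 0 ≤ w S) (hw1 : ∑ S, w S = 1)
    (Q : Ω → Prop) (μ : ℝ) (hμQ : μ = ∑ S ∈ Finset.univ.filter Q, w S)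
    (k : ℕ) (ε : ℝ) (hε : 0 < ε) :
    ∑ T ∈ Finset.univ.filter (fun T : Fin k → Ω =>
        (μ + ε) * k ≤
          ((Finset.univ.filter fun j : Fin k => Q (T j)).card : ℝ)),
      ∏ j, w (T j) ≤ Real.exp (-2 * k * ε ^ 2) := by
  have hμ := hμQ
  have hμ0 : 0 ≤ μ := hμ ▸ Finset.sum_nonneg fun S _ => hw0 S
  have hμ1 : μ ≤ 1 := by
    rw [hμ, ← hw1]
    exact Finset.sum_le_sum_of_subset_of_nonneg (Finset.filter_subset _ _)
      (fun S _ _ => hw0 S)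
  have hμ' : ∑ S ∈ Finset.univ.filter (fun S => ¬ Q S), w S = 1 - μ := by
    have := Finset.sum_filter_add_sum_filter_not Finset.univ Q w
    rw [hw1] at this; linarith
  set t : ℝ := 4 * ε with ht
  set b : Ω → ℝ := fun S => if Q S then 1 else 0 with hb
  have hcard : ∀ T : Fin k → Ω,
      ((Finset.univ.filter fun j : Fin k => Q (T j)).card : ℝ) = ∑ j, b (T j) := by
    intro T
    rw [Finset.sum_boole]
  set M : ℝ := ∑ S, w S * Real.exp (t * (b S - μ)) with hM
  have hMval : M = (1 - μ) * Real.exp (-(t * μ)) + μ * Real.exp (t * (1 - μ)) := by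
    rw [hM, ← Finset.sum_filter_add_sum_filter_not Finset.univ Q]
    have h1 : ∑ S ∈ Finset.univ.filter Q, w S * Real.exp (t * (b S - μ))
        = μ * Real.exp (t * (1 - μ)) := by
      rw [hμ, Finset.sum_mul]
      apply Finset.sum_congr rfl
      intro S hS
      rw [Finset.mem_filter] at hS
      simp [hb, hS.2]
    have h2 : ∑ S ∈ Finset.univ.filter (fun S => ¬ Q S), w S * Real.exp (t * (b S - μ))
        = (1 - μ) * Real.exp (-(t * μ)) := by
      rw [← hμ', Finset.sum_mul]
      apply Finset.sum_congr rfl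
      intro S hS
      rw [Finset.mem_filter] at hS
      rw [hb]
      simp only [if_neg hS.2]
      congr 1
      ring
    rw [h1, h2]; ring
  have hM0 : 0 ≤ M := Finset.sum_nonneg fun S _ => mul_nonneg (hw0 S) (Real.exp_pos _).le
  have hMle : M ≤ Real.exp (t ^ 2 / 8) := hMval ▸ bernoulli_mgf_le hμ0 hμ1
  have hW0 : ∀ T : Fin k → Ω, 0 ≤ ∏ j, w (T j) :=
    fun T => Finset.prod_nonneg fun j _ => hw0 (T j)
  have key : ∀ T : Fin k → Ω,
      (∏ j, w (T j)) * Real.exp (t * ((∑ j, b (T j)) - (μ + ε) * k))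
        = Real.exp (-(t * ε * k)) * ∏ j, (w (T j) * Real.exp (t * (b (T j) - μ))) := by
    intro T
    rw [Finset.prod_mul_distrib, ← Real.exp_sum]
    have hsum : ∑ j : Fin k, t * (b (T j) - μ) = t * (∑ j, b (T j)) - k * (t * μ) := by
      simp only [mul_sub, Finset.sum_sub_distrib, Finset.sum_const, Finset.card_univ,
        Fintype.card_fin, nsmul_eq_mul, ← Finset.mul_sum]
    rw [hsum]
    have harg : t * ((∑ j, b (T j)) - (μ + ε) * k)
        = -(t * ε * k) + (t * (∑ j, b (T j)) - k * (t * μ)) := by ring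
    rw [harg, Real.exp_add]
    ring
  calc ∑ T ∈ Finset.univ.filter (fun T : Fin k → Ω =>
        (μ + ε) * k ≤ ((Finset.univ.filter fun j : Fin k => Q (T j)).card : ℝ)), ∏ j, w (T j)
      ≤ ∑ T ∈ Finset.univ.filter (fun T : Fin k → Ω =>
        (μ + ε) * k ≤ ((Finset.univ.filter fun j : Fin k => Q (T j)).card : ℝ)),
          (∏ j, w (T j)) * Real.exp (t * ((∑ j, b (T j)) - (μ + ε) * k)) := by
        apply Finset.sum_le_sum
        intro T hT
        rw [Finset.mem_filter] at hT
        have harg : 0 ≤ t * ((∑ j, b (T j)) - (μ + ε) * k) := by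
          have h5 := hT.2
          rw [hcard T] at h5
          have h4 : 0 ≤ (∑ j, b (T j)) - (μ + ε) * k := by linarith
          positivity
        nlinarith [hW0 T, Real.one_le_exp harg]
    _ ≤ ∑ T : Fin k → Ω, (∏ j, w (T j)) * Real.exp (t * ((∑ j, b (T j)) - (μ + ε) * k)) := by
        apply Finset.sum_le_sum_of_subset_of_nonneg (Finset.filter_subset _ _)
        intro T _ _
        exact mul_nonneg (hW0 T) (Real.exp_pos _).le
    _ = Real.exp (-(t * ε * k)) * M ^ k := by
        rw [Finset.sum_congr rfl (fun T _ => key T), ← Finset.mul_sum, hM,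
          Fintype.sum_pow (fun S => w S * Real.exp (t * (b S - μ))) k]
    _ ≤ Real.exp (-(t * ε * k)) * (Real.exp (t ^ 2 / 8)) ^ k := by
        have := pow_le_pow_left₀ hM0 hMle k
        have h6 : (0:ℝ) < Real.exp (-(t * ε * k)) := Real.exp_pos _
        nlinarith
    _ = Real.exp (-2 * k * ε ^ 2) := by
        rw [← Real.exp_nat_mul, ← Real.exp_add]
        congr 1
        rw [ht]; ring

lemma chernoff_two_sided (w : Ω → ℝ) (hw0 : ∀ S, 0 ≤ w S) (hw1 : ∑ S, w S = 1)
    (Q : Ω → Prop) (μ : ℝ) (hμQ : μ = ∑ S ∈ Finset.univ.filter Q, w S)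
    (k : ℕ) (hk : 0 < k) (ε : ℝ) (hε : 0 < ε) :
    ∑ T ∈ Finset.univ.filter (fun T : Fin k → Ω =>
        ¬ |μ -
            ((Finset.univ.filter fun j : Fin k => Q (T j)).card : ℝ) / k| ≤ ε),
      ∏ j, w (T j) ≤ 2 * Real.exp (-2 * k * ε ^ 2) := by
  have hμ' : ∑ S ∈ Finset.univ.filter (fun S => ¬ Q S), w S = 1 - μ := by
    have := Finset.sum_filter_add_sum_filter_not Finset.univ Q w
    rw [hw1] at this; rw [hμQ]; linarith
  have hW0 : ∀ T : Fin k → Ω, 0 ≤ ∏ j, w (T j) :=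
    fun T => Finset.prod_nonneg fun j _ => hw0 (T j)
  set up := Finset.univ.filter (fun T : Fin k → Ω =>
        (μ + ε) * k ≤ ((Finset.univ.filter fun j : Fin k => Q (T j)).card : ℝ)) with hup
  set lo := Finset.univ.filter (fun T : Fin k → Ω =>
        ((1 - μ) + ε) * k ≤
          ((@Finset.filter (Fin k) (fun j => ¬ Q (T j))
            (fun j => Classical.propDecidable _) Finset.univ).card : ℝ)) with hlo
  have hinstrw : ∀ T : Fin k → Ω,
      (@Finset.filter (Fin k) (fun j => ¬ Q (T j))
        (fun j => Classical.propDecidable _) Finset.univ)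
      = Finset.univ.filter (fun j => ¬ Q (T j)) :=
    fun T => Finset.filter_congr_decidable _ _ _
  have hsub : Finset.univ.filter (fun T : Fin k → Ω =>
        ¬ |μ - ((Finset.univ.filter fun j : Fin k => Q (T j)).card : ℝ) / k| ≤ ε) ⊆ up ∪ lo := by
    intro T hT
    rw [Finset.mem_filter] at hT
    have hT2 := hT.2
    rw [not_le, lt_abs] at hT2
    set cQ := ((Finset.univ.filter fun j : Fin k => Q (T j)).card : ℝ) with hcQ
    have hcQk : ((Finset.univ.filter fun j : Fin k => ¬ Q (T j)).card : ℝ) = k - cQ := by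
      have := Finset.card_filter_add_card_filter_not (s := (Finset.univ : Finset (Fin k)))
        (p := fun j => Q (T j))
      rw [Finset.card_univ, Fintype.card_fin] at this
      rw [hcQ]
      push_cast [← this]
      ring
    have hkpos : (0:ℝ) < k := by positivity
    rw [Finset.mem_union]
    rcases hT2 with h | h
    · right
      rw [hlo, Finset.mem_filter]
      refine ⟨Finset.mem_univ _, ?_⟩
      rw [hinstrw T, hcQk]
      have : cQ / k ≤ μ - ε := by linarith
      have h7 : cQ ≤ (μ - ε) * k := by
        rw [div_le_iff₀ hkpos] at this
        linarith
      nlinarith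
    · left
      rw [hup, Finset.mem_filter]
      refine ⟨Finset.mem_univ _, ?_⟩
      have : μ + ε ≤ cQ / k := by rw [neg_sub] at h; linarith
      rw [le_div_iff₀ hkpos] at this
      linarith
  have hupb : ∑ T ∈ up, ∏ j, w (T j) ≤ Real.exp (-2 * k * ε ^ 2) :=
    chernoff_upper w hw0 hw1 Q μ hμQ k ε hε
  have hlob : ∑ T ∈ lo, ∏ j, w (T j) ≤ Real.exp (-2 * k * ε ^ 2) :=
    chernoff_upper w hw0 hw1 (fun S => ¬ Q S) (1 - μ)
      (hμ'.symm.trans (Finset.sum_congr (Finset.filter_congr_decidable _ _ _).symm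
        (fun _ _ => rfl))) k ε hε
  calc ∑ T ∈ Finset.univ.filter (fun T : Fin k → Ω =>
        ¬ |μ - ((Finset.univ.filter fun j : Fin k => Q (T j)).card : ℝ) / k| ≤ ε),
          ∏ j, w (T j)
      ≤ ∑ T ∈ up ∪ lo, ∏ j, w (T j) :=
        Finset.sum_le_sum_of_subset_of_nonneg hsub (fun T _ _ => hW0 T)
    _ ≤ (∑ T ∈ up, ∏ j, w (T j)) + ∑ T ∈ lo, ∏ j, w (T j) := by
        have := Finset.sum_union_inter (s₁ := up) (s₂ := lo) (f := fun T => ∏ j, w (T j))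
        have h8 : 0 ≤ ∑ T ∈ up ∩ lo, ∏ j, w (T j) :=
          Finset.sum_nonneg fun T _ => hW0 T
        linarith
    _ ≤ 2 * Real.exp (-2 * k * ε ^ 2) := by linarith


end Chernoff

end RSE

namespace RSE

variable [Fintype α] {n : ℕ} {p : ℕ → α → ℝ}

lemma nonempty_alpha (hn : 1 ≤ n) (hp : IsWeighted n p) : Nonempty α := by
  by_contra h
  rw [not_nonempty_iff] at h
  have := (hp 1 le_rfl hn).2
  rw [Finset.univ_eq_empty, Finset.sum_empty] at this
  norm_num at this

lemma strWeight_nonneg (hp : IsWeighted n p) (S : Fin n → α) : 0 ≤ strWeight n p S :=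
  Finset.prod_nonneg fun j _ =>
    (hp ((j : ℕ) + 1) (Nat.le_add_left 1 j) (Nat.succ_le_of_lt j.2)).1 (S j)

lemma sum_strWeight (hp : IsWeighted n p) : ∑ S : Fin n → α, strWeight n p S = 1 := by
  have : ∑ S : Fin n → α, strWeight n p S = ∏ j : Fin n, ∑ c : α, p ((j : ℕ) + 1) c := by
    rw [Fintype.prod_sum (fun (j : Fin n) (c : α) => p ((j : ℕ) + 1) c)]
    rfl
  rw [this]
  apply Finset.prod_eq_one
  intro j _
  exact (hp ((j : ℕ) + 1) (Nat.le_add_left 1 j) (Nat.succ_le_of_lt j.2)).2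

lemma matchProb_nonneg (hp : IsWeighted n p) (P : List α) :
    ∀ i, 1 ≤ i → 0 ≤ matchProb n p P i := by
  induction P with
  | nil => intro i _; rw [matchProb]; norm_num
  | cons c P ih =>
    intro i hi
    rw [matchProb]
    split_ifs with h
    · exact mul_nonneg ((hp i hi h).1 c) (ih (i + 1) (by omega))
    · exact le_rfl

lemma matchProb_overflow (P : List α) :
    ∀ i, i ≤ n → n + 1 < i + P.length → matchProb n p P i = 0 := by
  induction P with
  | nil => intro i hin hov; simp at hov; omega
  | cons c P ih =>
    intro i hin hov
    rw [matchProb, if_pos hin]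
    rcases Nat.lt_or_ge n (i + 1) with h | h
    · cases P with
      | nil => simp at hov; omega
      | cons c' P' =>
        rw [matchProb, if_neg (by omega)]
        ring
    · rw [ih (i + 1) h (by simp at hov ⊢; omega)]
      ring

lemma matchProb_eq_prod (d : α) (P : List α) :
    ∀ i, 1 ≤ i → i + P.length ≤ n + 1 →
      matchProb n p P i = ∏ t ∈ Finset.range P.length, p (i + t) (P.getD t d) := by
  induction P with
  | nil => intro i _ _; simp [matchProb]
  | cons c P ih =>
    intro i hi hfit
    rw [matchProb, if_pos (by simp at hfit; omega)]
    rw [List.length_cons, Finset.prod_range_succ']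
    rw [ih (i + 1) (by omega) (by simp at hfit ⊢; omega)]
    simp only [List.getD_cons_succ, List.getD_cons_zero]
    have : ∀ t, i + 1 + t = i + (t + 1) := by omega
    rw [Nat.add_zero]
    rw [mul_comm]
    congr 1
    apply Finset.prod_congr rfl
    intro t _
    rw [this t]

end RSE

namespace RSE2
open RSE

variable [Fintype α] {n : ℕ} {p : ℕ → α → ℝ}

lemma matches_iff (d : α) {S : Fin n → α} {P : List α} {i : ℕ} (hi : 1 ≤ i)
    (hfit : i + P.length ≤ n + 1) :
    Matches S P i ↔ ∀ j : Fin n, i - 1 ≤ (j : ℕ) → (j : ℕ) < i - 1 + P.length →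
      S j = P.getD ((j : ℕ) - (i - 1)) d := by
  unfold Matches
  have hL : (List.ofFn S).length = n := List.length_ofFn (f := S)
  have hlen : (((List.ofFn S).drop (i - 1)).take P.length).length = P.length := by
    simp only [List.length_take, List.length_drop, hL]
    omega
  constructor
  · intro h j hj1 hj2
    set t := (j : ℕ) - (i - 1) with hts
    have ht : t < P.length := by omega
    have h1 : (((List.ofFn S).drop (i - 1)).take P.length)[t]'(by rw [hlen]; exact ht)
        = P[t]'ht := List.getElem_of_eq h _
    rw [List.getElem_take, List.getElem_drop, List.getElem_ofFn] at h1
    have hj : (⟨i - 1 + t, by omega⟩ : Fin n) = j := by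
      apply Fin.ext; simp; omega
    rw [List.getD_eq_getElem P d ht, ← h1, ← hj]
  · intro h
    apply List.ext_getElem hlen
    intro t h1 h2
    rw [List.getElem_take, List.getElem_drop, List.getElem_ofFn]
    have hw := h ⟨i - 1 + t, by omega⟩ (by show i - 1 ≤ i - 1 + t; omega)
      (by show i - 1 + t < i - 1 + P.length; omega)
    simp only at hw
    rw [hw]
    have : i - 1 + t - (i - 1) = t := by omega
    rw [this, List.getD_eq_getElem P d h2]

set_option maxHeartbeats 1000000 in
lemma sum_filter_matches (hn : 1 ≤ n) (hp : IsWeighted n p) (P : List α) (i : ℕ) (hi : 1 ≤ i) :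
    ∑ S ∈ Finset.univ.filter (fun S : Fin n → α => Matches S P i), strWeight n p S
      = matchProb n p P i := by
  have hne : Nonempty α := nonempty_alpha hn hp
  set d : α := Classical.arbitrary α with hd
  rcases eq_or_ne P [] with rfl | hPne
  · have : ∀ S : Fin n → α, Matches S [] i := by
      intro S; unfold Matches; simp
    rw [Finset.filter_true_of_mem (fun S _ => this S)]
    rw [sum_strWeight hp]
    rfl
  by_cases hfit : i + P.length ≤ n + 1
  · -- main case
    rw [Finset.sum_filter]
    have hper : ∀ S : Fin n → α, (if Matches S P i then strWeight n p S else 0)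
        = ∏ j : Fin n, (p ((j : ℕ) + 1) (S j) *
            (if i - 1 ≤ (j : ℕ) ∧ (j : ℕ) < i - 1 + P.length then
              (if S j = P.getD ((j : ℕ) - (i - 1)) d then 1 else 0) else 1)) := by
      intro S
      rw [Finset.prod_mul_distrib]
      have hind : (if Matches S P i then (1:ℝ) else 0)
          = ∏ j : Fin n, (if i - 1 ≤ (j : ℕ) ∧ (j : ℕ) < i - 1 + P.length then
              (if S j = P.getD ((j : ℕ) - (i - 1)) d then (1:ℝ) else 0) else 1) := by
      
        by_cases h : Matches S P i
        · rw [if_pos h]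
          symm
          apply Finset.prod_eq_one
          intro j _
          split_ifs with h1 h2
          · rfl
          · exact absurd ((matches_iff d hi hfit).1 h j h1.1 h1.2) h2
          · rfl
        · rw [if_neg h]
          rw [matches_iff d hi hfit] at h
          push_neg at h
          obtain ⟨j, hj1, hj2, hne'⟩ := h
          symm
          apply Finset.prod_eq_zero (Finset.mem_univ j)
          rw [if_pos ⟨hj1, hj2⟩, if_neg hne']
      rw [← hind]
      unfold strWeight
      split_ifs with h
      · ring
      · ring
    rw [Finset.sum_congr rfl (fun S _ => hper S)]
    have hswap : (∑ S : Fin n → α, ∏ j : Fin n, (p ((j : ℕ) + 1) (S j) *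
            (if i - 1 ≤ (j : ℕ) ∧ (j : ℕ) < i - 1 + P.length then
              (if S j = P.getD ((j : ℕ) - (i - 1)) d then (1:ℝ) else 0) else 1)))
        = ∏ j : Fin n, ∑ c : α, (p ((j : ℕ) + 1) c *
            (if i - 1 ≤ (j : ℕ) ∧ (j : ℕ) < i - 1 + P.length then
              (if c = P.getD ((j : ℕ) - (i - 1)) d then (1:ℝ) else 0) else 1)) :=
      (Fintype.prod_sum (fun (j : Fin n) (c : α) => p ((j : ℕ) + 1) c *
            (if i - 1 ≤ (j : ℕ) ∧ (j : ℕ) < i - 1 + P.length then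
              (if c = P.getD ((j : ℕ) - (i - 1)) d then (1:ℝ) else 0) else 1))).symm
    rw [hswap]
    have hfac : ∀ j : Fin n, (∑ c : α, p ((j : ℕ) + 1) c *
            (if i - 1 ≤ (j : ℕ) ∧ (j : ℕ) < i - 1 + P.length then
              (if c = P.getD ((j : ℕ) - (i - 1)) d then 1 else 0) else 1))
        = (if i - 1 ≤ (j : ℕ) ∧ (j : ℕ) < i - 1 + P.length then
            p ((j : ℕ) + 1) (P.getD ((j : ℕ) - (i - 1)) d) else 1) := by
      intro j
      have hj1 : 1 ≤ (j : ℕ) + 1 := by omega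
      have hj2 : (j : ℕ) + 1 ≤ n := j.2
      split_ifs with h
      · simp only [if_pos h, mul_ite, mul_one, mul_zero, Finset.sum_ite_eq',
          Finset.mem_univ, if_true]
      · simp only [if_neg h, mul_one]
        exact (hp ((j : ℕ) + 1) hj1 hj2).2
    rw [Finset.prod_congr rfl (fun j _ => hfac j)]
    rw [← Finset.prod_filter]
    rw [matchProb_eq_prod d P i hi hfit]
    refine Finset.prod_bij'
      (fun (j : Fin n) _ => (j : ℕ) - (i - 1))
      (fun (t : ℕ) (ht : t ∈ Finset.range P.length) =>
        (⟨i - 1 + t, by simp at ht; omega⟩ : Fin n)) ?_ ?_ ?_ ?_ ?_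
    · intro j hj
      rw [Finset.mem_filter] at hj
      beta_reduce
      rw [Finset.mem_range]
      omega
    · intro t ht
      rw [Finset.mem_filter]
      have ht' := Finset.mem_range.1 ht
      refine ⟨Finset.mem_univ _, ?_, ?_⟩
      · show i - 1 ≤ i - 1 + t
        omega
      · show i - 1 + t < i - 1 + P.length
        omega
    · intro j hj
      rw [Finset.mem_filter] at hj
      apply Fin.ext
      show i - 1 + ((j : ℕ) - (i - 1)) = (j : ℕ)
      omega
    · intro t ht
      show i - 1 + t - (i - 1) = t
      omega
    · intro j hj
      rw [Finset.mem_filter] at hj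
      beta_reduce
      congr 1
      omega
  · -- overflow case
    have hemp : Finset.univ.filter (fun S : Fin n → α => Matches S P i) = ∅ := by
      rw [Finset.filter_eq_empty_iff]
      intro S _
      intro h
      have := congrArg List.length h
      simp only [List.length_take, List.length_drop, List.length_ofFn] at this
      have h2 : P.length ≤ n - (i - 1) :=
        (le_of_eq this.symm).trans (min_le_right _ _)
      have h3 : 1 ≤ P.length := List.length_pos_iff.mpr hPne
      omega
    rw [hemp, Finset.sum_empty]
    symm
    rcases le_or_gt i n with h | h
    · exact matchProb_overflow P i h (by omega)
    · cases P with
      | nil => exact absurd rfl hPne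
      | cons c P' => rw [matchProb, if_neg (by omega)]

end RSE2

namespace RSE3
open RSE RSE2

variable [Fintype α] {n : ℕ} {p : ℕ → α → ℝ}

noncomputable def lenLists (α : Type*) [Fintype α] : ℕ → Finset (List α)
  | 0 => {[]}
  | L + 1 => ((Finset.univ : Finset α) ×ˢ lenLists α L).image fun x => x.1 :: x.2

lemma mem_lenLists (L : ℕ) : ∀ P : List α, P ∈ lenLists α L ↔ P.length = L := by
  induction L with
  | zero =>
    intro P
    rw [lenLists]
    simp [List.length_eq_zero_iff]
  | succ L ih =>
    intro P
    rw [lenLists, Finset.mem_image]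
    constructor
    · rintro ⟨⟨c, Q⟩, hm, rfl⟩
      rw [Finset.mem_product] at hm
      simp [(ih Q).1 hm.2]
    · intro h
      cases P with
      | nil => simp at h
      | cons c Q =>
        refine ⟨(c, Q), ?_, rfl⟩
        rw [Finset.mem_product]
        exact ⟨Finset.mem_univ _, (ih Q).2 (by simpa using h)⟩

lemma sum_matchProb_le_one (hp : IsWeighted n p) (L : ℕ) :
    ∀ i, 1 ≤ i → ∑ P ∈ lenLists α L, matchProb n p P i ≤ 1 := by
  induction L with
  | zero =>
    intro i hi
    rw [lenLists, Finset.sum_singleton]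
    rw [matchProb]
  | succ L ih =>
    intro i hi
    rw [lenLists, Finset.sum_image (by
      intro x _ y _ hxy
      simp only [List.cons.injEq] at hxy
      exact Prod.ext hxy.1 hxy.2)]
    rw [Finset.sum_product]
    by_cases hin : i ≤ n
    · have hterm : ∀ c : α, ∑ Q ∈ lenLists α L, matchProb n p (c :: Q) i
          = p i c * ∑ Q ∈ lenLists α L, matchProb n p Q (i + 1) := by
        intro c
        rw [Finset.mul_sum]
        apply Finset.sum_congr rfl
        intro Q _
        rw [matchProb, if_pos hin]
      rw [Finset.sum_congr rfl (fun c _ => hterm c)]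
      have hsum : ∑ Q ∈ lenLists α L, matchProb n p Q (i + 1) ≤ 1 := ih (i + 1) (by omega)
      calc ∑ c : α, p i c * ∑ Q ∈ lenLists α L, matchProb n p Q (i + 1)
          ≤ ∑ c : α, p i c := by
            apply Finset.sum_le_sum
            intro c _
            have hpc := (hp i hi hin).1 c
            nlinarith [Finset.sum_nonneg (fun Q (_ : Q ∈ lenLists α L) =>
              matchProb_nonneg hp Q (i + 1) (by omega))]
        _ = 1 := (hp i hi hin).2
    · have : ∀ c : α, ∀ Q ∈ lenLists α L, matchProb n p (c :: Q) i = 0 := by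
        intro c Q _
        rw [matchProb, if_neg hin]
      calc ∑ c : α, ∑ Q ∈ lenLists α L, matchProb n p (c :: Q) i
          = 0 := by
            apply Finset.sum_eq_zero
            intro c _
            exact Finset.sum_eq_zero (this c)
        _ ≤ 1 := by norm_num

lemma card_heavy (hp : IsWeighted n p) {ε : ℝ} (hε0 : 0 < ε) (L i : ℕ) (hi : 1 ≤ i) :
    (((lenLists α L).filter (fun P => ε ≤ matchProb n p P i)).card : ℝ) * ε ≤ 1 := by
  set H := (lenLists α L).filter (fun P => ε ≤ matchProb n p P i) with hH
  calc (H.card : ℝ) * ε = ∑ _P ∈ H, ε := by rw [Finset.sum_const, nsmul_eq_mul]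
    _ ≤ ∑ P ∈ H, matchProb n p P i := by
        apply Finset.sum_le_sum
        intro P hP
        rw [hH, Finset.mem_filter] at hP
        exact hP.2
    _ ≤ ∑ P ∈ lenLists α L, matchProb n p P i := by
        apply Finset.sum_le_sum_of_subset_of_nonneg (Finset.filter_subset _ _)
        intro P _ _
        exact matchProb_nonneg hp P i hi
    _ ≤ 1 := sum_matchProb_le_one hp L i hi

lemma union_bound {γ Ω : Type*} (f : Ω → ℝ) (hf : ∀ x, 0 ≤ f x) (t : Finset γ) :
    ∀ (s : Finset Ω) (g : γ → Finset Ω), (∀ x ∈ s, ∃ e ∈ t, x ∈ g e) →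
      ∑ x ∈ s, f x ≤ ∑ e ∈ t, ∑ x ∈ g e, f x := by
  classical
  induction t using Finset.induction_on with
  | empty =>
    intro s g h
    have hs : s = ∅ := by
      rw [Finset.eq_empty_iff_forall_notMem]
      intro x hx
      obtain ⟨e, he, _⟩ := h x hx
      exact absurd he (Finset.notMem_empty e)
    rw [hs]
    simp
  | insert _ _ hnotin ih =>
    rename_i a t'
    intro s g h
    rw [Finset.sum_insert hnotin]
    have hsplit : ∑ x ∈ s, f x = ∑ x ∈ s ∩ g a, f x + ∑ x ∈ s \ g a, f x :=
      (Finset.sum_inter_add_sum_sdiff s (g a) f).symm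
    have h1 : ∑ x ∈ s ∩ g a, f x ≤ ∑ x ∈ g a, f x :=
      Finset.sum_le_sum_of_subset_of_nonneg Finset.inter_subset_right (fun x _ _ => hf x)
    have h2 : ∑ x ∈ s \ g a, f x ≤ ∑ e ∈ t', ∑ x ∈ g e, f x := by
      apply ih
      intro x hx
      rw [Finset.mem_sdiff] at hx
      obtain ⟨e, he, hxe⟩ := h x hx.1
      rcases Finset.mem_insert.1 he with rfl | he'
      · exact absurd hxe hx.2
      · exact ⟨e, he', hxe⟩
    linarith

set_option maxHeartbeats 1000000 in
lemma final_arith (n : ℕ) (hn : 1 ≤ n) (ε c : ℝ) (hε0 : 0 < ε) (hε1 : ε ≤ 1 / 2)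
    (hc : 0 < c) (k : ℕ)
    (hkbig : (c + 2) * ε⁻¹ ^ 2 * Real.log ((n : ℝ) / ε) ≤ (k : ℝ)) :
    (n : ℝ) * ((n : ℝ) + 1) * ε⁻¹ * (2 * Real.exp (-2 * k * ε ^ 2)) ≤ (ε / n) ^ c := by
  have hn' : (1 : ℝ) ≤ (n : ℝ) := by exact_mod_cast hn
  have hnpos : (0 : ℝ) < (n : ℝ) := by linarith
  set r := ε / (n : ℝ) with hr
  have hrpos : 0 < r := by positivity
  have hrle : r ≤ ε := by
    rw [hr]
    exact div_le_self hε0.le hn'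
  have hr1 : r ≤ 1 := le_trans hrle (by linarith)
  set L := Real.log ((n : ℝ) / ε) with hL
  have h1 : (c + 2) * L ≤ k * ε ^ 2 := by
    have hε2 : (0 : ℝ) < ε ^ 2 := by positivity
    have h := mul_le_mul_of_nonneg_right hkbig (le_of_lt hε2)
    calc (c + 2) * L = (c + 2) * ε⁻¹ ^ 2 * L * ε ^ 2 := by
          field_simp
      _ ≤ k * ε ^ 2 := h
  have hy : (0 : ℝ) < (n : ℝ) / ε := by positivity
  have hstep2 : Real.exp (-2 * k * ε ^ 2) ≤ r ^ (2 * c + 4) := by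
    have hexp : Real.exp (-2 * k * ε ^ 2) ≤ Real.exp (-((2 * c + 4) * L)) := by
      apply Real.exp_le_exp.mpr
      nlinarith
    have heq : r ^ (2 * c + 4) = Real.exp (-((2 * c + 4) * L)) := by
      rw [Real.rpow_def_of_pos hrpos]
      congr 1
      have hlr : Real.log r = -L := by
        rw [hr, hL, ← Real.log_inv, inv_div]
      rw [hlr]
      ring
    rw [heq]
    exact hexp
  have hsplit : r ^ (2 * c + 4) = r ^ (c + 4) * r ^ c := by
    rw [← Real.rpow_add hrpos]
    congr 1
    ring
  have hrc : r ^ c ≤ 1 := Real.rpow_le_one hrpos.le hr1 hc.le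
  have hr4 : r ^ (c + 4) = r ^ c * r ^ (4 : ℕ) := by
    rw [← Real.rpow_natCast r 4, ← Real.rpow_add hrpos]
    norm_num
  have hkey : (n : ℝ) * ((n : ℝ) + 1) * ε⁻¹ * (2 * r ^ (c + 4)) ≤ 1 := by
    have hb : (n : ℝ) * ((n : ℝ) + 1) * ε⁻¹ * (2 * r ^ (4 : ℕ)) ≤ 1 := by
      rw [hr, div_pow]
      have hn4 : (0 : ℝ) < (n : ℝ) ^ 4 := by positivity
      have heq2 : (n : ℝ) * ((n : ℝ) + 1) * ε⁻¹ * (2 * (ε ^ 4 / (n : ℝ) ^ 4))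
          = 2 * ((n : ℝ) + 1) * ε ^ 3 / (n : ℝ) ^ 3 := by
        field_simp
      rw [heq2, div_le_one (by positivity)]
      have hε3 : ε ^ 3 ≤ (1 / 2) ^ 3 := pow_le_pow_left₀ hε0.le hε1 3
      have hn3 : (n : ℝ) ≤ (n : ℝ) ^ 3 := by
        nlinarith [mul_nonneg (sub_nonneg.mpr hn') hnpos.le,
          mul_nonneg (mul_nonneg (sub_nonneg.mpr hn') hnpos.le) hnpos.le]
      nlinarith
    have hmono : r ^ (c + 4) ≤ r ^ (4 : ℕ) := by
      rw [hr4]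
      nlinarith [Real.rpow_nonneg hrpos.le c, pow_pos hrpos 4]
    nlinarith [pow_pos hrpos 4, Real.rpow_nonneg hrpos.le (c + 4)]
  calc (n : ℝ) * ((n : ℝ) + 1) * ε⁻¹ * (2 * Real.exp (-2 * k * ε ^ 2))
      ≤ (n : ℝ) * ((n : ℝ) + 1) * ε⁻¹ * (2 * r ^ (2 * c + 4)) := by
        have hpos : (0 : ℝ) ≤ (n : ℝ) * ((n : ℝ) + 1) * ε⁻¹ := by positivity
        nlinarith
    _ = ((n : ℝ) * ((n : ℝ) + 1) * ε⁻¹ * (2 * r ^ (c + 4))) * r ^ c := by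
        rw [hsplit]; ring
    _ ≤ 1 * r ^ c :=
        mul_le_mul_of_nonneg_right hkey (Real.rpow_nonneg hrpos.le c)
    _ = r ^ c := one_mul _



end RSE3

end Auxiliary

/-- sampling `k ≥ (c+2)·ε⁻²·ln(n/ε)` independent random strings from `X`,
with probability at least `1 − (ε/n)^c`, for every position `i` and every string `P`
with `P_X(P,i) ≥ ε`, the empirical frequency is within `ε` of `P_X(P,i)`. -/
theorem random_sampling_estimates [Fintype α]
    (n : ℕ) (hn : 1 ≤ n) (p : ℕ → α → ℝ) (hp : IsWeighted n p)
    (ε c : ℝ) (hε0 : 0 < ε) (hε1 : ε ≤ 1 / 2) (hc : 0 < c) (k : ℕ) (hk : 0 < k)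
    (hkbig : (c + 2) * ε⁻¹ ^ 2 * Real.log ((n : ℝ) / ε) ≤ (k : ℝ)) :
    1 - (ε / n) ^ c ≤
      ∑ T ∈ Finset.univ.filter (fun T : Fin k → Fin n → α =>
          ∀ (i : ℕ), 1 ≤ i → i ≤ n → ∀ P : List α, ε ≤ matchProb n p P i →
            |matchProb n p P i -
              ((Finset.univ.filter fun j : Fin k => Matches (T j) P i).card : ℝ) / k|
              ≤ ε),
        ∏ j, strWeight n p (T j) := by
  classical
  have hw0 : ∀ S : Fin n → α, 0 ≤ strWeight n p S := RSE.strWeight_nonneg hp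
  have hw1 : ∑ S : Fin n → α, strWeight n p S = 1 := RSE.sum_strWeight hp
  have hW0 : ∀ T : Fin k → Fin n → α, 0 ≤ ∏ j, strWeight n p (T j) :=
    fun T => Finset.prod_nonneg fun j _ => hw0 (T j)
  have hWtot : ∑ T : Fin k → Fin n → α, ∏ j, strWeight n p (T j) = 1 := by
    rw [← Fintype.sum_pow (strWeight n p) k, hw1, one_pow]
  set goodP : (Fin k → Fin n → α) → Prop := fun T =>
    ∀ (i : ℕ), 1 ≤ i → i ≤ n → ∀ P : List α, ε ≤ matchProb n p P i →
      |matchProb n p P i -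
        ((Finset.univ.filter fun j : Fin k => Matches (T j) P i).card : ℝ) / k| ≤ ε
    with hgoodP
  have hsplit := Finset.sum_filter_add_sum_filter_not Finset.univ goodP
    (fun T => ∏ j, strWeight n p (T j))
  rw [hWtot] at hsplit
  have hbad : ∑ T ∈ Finset.univ.filter (fun T => ¬ goodP T), ∏ j, strWeight n p (T j)
      ≤ (ε / n) ^ c := by
    set t : Finset (ℕ × List α) := (Finset.Icc 1 n).biUnion (fun i =>
      ((Finset.range (n + 1)).biUnion (fun L =>
        (RSE3.lenLists α L).filter (fun P => ε ≤ matchProb n p P i))).image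
        (fun P => (i, P))) with ht
    set g : ℕ × List α → Finset (Fin k → Fin n → α) := fun e =>
      Finset.univ.filter (fun T => ¬ |matchProb n p e.2 e.1 -
        ((Finset.univ.filter fun j : Fin k => Matches (T j) e.2 e.1).card : ℝ) / k| ≤ ε)
      with hg
    have hcover : ∀ T ∈ Finset.univ.filter (fun T => ¬ goodP T), ∃ e ∈ t, T ∈ g e := by
      intro T hT
      rw [Finset.mem_filter] at hT
      have hT2 := hT.2
      simp only [hgoodP] at hT2
      push_neg at hT2
      obtain ⟨i, hi1, hin, P, hheavy, hbb⟩ := hT2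
      have hlen : P.length ≤ n := by
        by_contra hcon
        push_neg at hcon
        have h0 := RSE.matchProb_overflow (p := p) P i hin (by omega)
        rw [h0] at hheavy
        linarith
      refine ⟨(i, P), ?_, ?_⟩
      · rw [ht, Finset.mem_biUnion]
        refine ⟨i, Finset.mem_Icc.mpr ⟨hi1, hin⟩, ?_⟩
        rw [Finset.mem_image]
        refine ⟨P, ?_, rfl⟩
        rw [Finset.mem_biUnion]
        refine ⟨P.length, Finset.mem_range.mpr (by omega), ?_⟩
        rw [Finset.mem_filter]
        exact ⟨(RSE3.mem_lenLists P.length P).mpr rfl, hheavy⟩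
      · rw [hg, Finset.mem_filter]
        exact ⟨Finset.mem_univ _, by simpa using hbb⟩
    have hub := RSE3.union_bound (fun T : Fin k → Fin n → α => ∏ j, strWeight n p (T j))
      hW0 t (Finset.univ.filter (fun T => ¬ goodP T)) g hcover
    have hper : ∀ e ∈ t, ∑ T ∈ g e, ∏ j, strWeight n p (T j)
        ≤ 2 * Real.exp (-2 * k * ε ^ 2) := by
      intro e he
      rw [ht, Finset.mem_biUnion] at he
      obtain ⟨i, hiIcc, hei⟩ := he
      rw [Finset.mem_image] at hei
      obtain ⟨P, hP, rfl⟩ := hei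
      rw [Finset.mem_biUnion] at hP
      obtain ⟨L, _, hPL⟩ := hP
      rw [Finset.mem_filter] at hPL
      rw [Finset.mem_Icc] at hiIcc
      exact RSE.chernoff_two_sided (strWeight n p) hw0 hw1
        (fun S => Matches S P i) (matchProb n p P i)
        (RSE2.sum_filter_matches hn hp P i hiIcc.1).symm k hk ε hε0
    have hcount : (t.card : ℝ) ≤ (n : ℝ) * ((n : ℝ) + 1) * ε⁻¹ := by
      have hc1 : t.card ≤ ∑ i ∈ Finset.Icc 1 n, ∑ L ∈ Finset.range (n + 1),
          ((RSE3.lenLists α L).filter (fun P => ε ≤ matchProb n p P i)).card := by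
        rw [ht]
        refine le_trans (Finset.card_biUnion_le) (Finset.sum_le_sum fun i _ => ?_)
        refine le_trans (Finset.card_image_le) Finset.card_biUnion_le
      have hc2 : ((∑ i ∈ Finset.Icc 1 n, ∑ L ∈ Finset.range (n + 1),
          ((RSE3.lenLists α L).filter (fun P => ε ≤ matchProb n p P i)).card : ℕ) : ℝ)
          ≤ (n : ℝ) * ((n : ℝ) + 1) * ε⁻¹ := by
        push_cast
        calc ∑ i ∈ Finset.Icc 1 n, ∑ L ∈ Finset.range (n + 1),
            (((RSE3.lenLists α L).filter (fun P => ε ≤ matchProb n p P i)).card : ℝ)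
            ≤ ∑ i ∈ Finset.Icc 1 n, ∑ _L ∈ Finset.range (n + 1), ε⁻¹ := by
              refine Finset.sum_le_sum fun i hi => Finset.sum_le_sum fun L _ => ?_
              rw [Finset.mem_Icc] at hi
              have := RSE3.card_heavy hp hε0 L i hi.1
              rw [← one_div]
              rw [le_div_iff₀ hε0]
              exact this
          _ = (n : ℝ) * ((n : ℝ) + 1) * ε⁻¹ := by
              have hcard : (Finset.Icc 1 n).card = n := by
                rw [Nat.card_Icc]
                omega
              rw [Finset.sum_const, Finset.sum_const, Finset.card_range, hcard]
              simp only [nsmul_eq_mul]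
              push_cast
              ring
      calc (t.card : ℝ) ≤ _ := Nat.cast_le.mpr hc1
        _ ≤ (n : ℝ) * ((n : ℝ) + 1) * ε⁻¹ := hc2
    calc ∑ T ∈ Finset.univ.filter (fun T => ¬ goodP T), ∏ j, strWeight n p (T j)
        ≤ ∑ e ∈ t, ∑ T ∈ g e, ∏ j, strWeight n p (T j) := hub
      _ ≤ ∑ _e ∈ t, 2 * Real.exp (-2 * k * ε ^ 2) := Finset.sum_le_sum hper
      _ = (t.card : ℝ) * (2 * Real.exp (-2 * k * ε ^ 2)) := by
          rw [Finset.sum_const, nsmul_eq_mul]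
      _ ≤ (n : ℝ) * ((n : ℝ) + 1) * ε⁻¹ * (2 * Real.exp (-2 * k * ε ^ 2)) := by
          have h2e : 0 ≤ 2 * Real.exp (-2 * k * ε ^ 2) := by positivity
          exact mul_le_mul_of_nonneg_right hcount h2e
      _ ≤ (ε / n) ^ c := RSE3.final_arith n hn ε c hε0 hε1 hc k hkbig
  linarith
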